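/- Let Y be a nonnegative random variable with distribution function F, and fix constants θ̃ > 0, γ > 0, E > 0, M̄ ∈ ℝ with d* := θ̃/(γE) + M̄/E ≥ 0. Over all measurable indemnity functions I with 0 ≤ I(y) ≤ y, the functional J(I) = −E(1+θ̃)𝔼[I(Y)] − E·𝔼[Y − I(Y)] + γ M̄ E 𝔼[Y − I(Y)] − (γE²/2)𝔼[(Y − I(Y))²] is maximized by the deductible indemnity I*(y) = max(y − d*, 0). -/

import Mathlib

open MeasureTheory

/-- Pointwise optimality of the deductible retention. -/
lemma deductible_pointwise (θt γ E Mbar dstar y i : ℝ)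
    (hγ : 0 < γ) (hE : 0 < E)
    (hdstar : dstar = θt / (γ * E) + Mbar / E)
    (hy : 0 ≤ y) (hi0 : 0 ≤ i) (hiy : i ≤ y) :
    -E * (1 + θt) * i - E * (y - i) + γ * Mbar * E * (y - i)
      - γ * E ^ 2 / 2 * (y - i) ^ 2
    ≤ -E * (1 + θt) * (max (y - dstar) 0) - E * (y - max (y - dstar) 0)
      + γ * Mbar * E * (y - max (y - dstar) 0)
      - γ * E ^ 2 / 2 * (y - max (y - dstar) 0) ^ 2 := by
  have key : γ * E * dstar = θt + γ * Mbar := by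
    have hγE : γ * E ≠ 0 := by positivity
    field_simp [hdstar]
    subst hdstar
    field_simp
  have hθt : θt = γ * E * dstar - γ * Mbar := by linarith
  subst hθt
  rcases le_or_gt y dstar with h | h
  · rw [max_eq_right (by linarith)]
    nlinarith [mul_nonneg (mul_nonneg (mul_nonneg hγ.le (mul_pos hE hE).le) hi0)
      (show (0:ℝ) ≤ dstar - y + i / 2 by linarith)]
  · rw [max_eq_left (by linarith)]
    nlinarith [mul_nonneg (mul_nonneg hγ.le (sq_nonneg E)) (sq_nonneg (i - (y - dstar)))]

/-- Optimality of the deductible (stop-loss) indemnity: among all measurable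
indemnity functions `I` with `0 ≤ I(y) ≤ y`, the functional
`J(I) = −E(1+θ̃)𝔼[I(Y)] − E𝔼[Y−I(Y)] + γM̄E𝔼[Y−I(Y)] − (γE²/2)𝔼[(Y−I(Y))²]`
is maximized by `I*(y) = max(y − d*, 0)` with `d* = θ̃/(γE) + M̄/E ≥ 0`. -/
theorem stmt_2 {Ω : Type*} [MeasureSpace Ω] [IsProbabilityMeasure (volume : Measure Ω)]
    (Y : Ω → ℝ) (hYmeas : Measurable Y) (hYpos : ∀ ω, 0 ≤ Y ω)
    (hYint : Integrable Y) (hY2int : Integrable (fun ω => (Y ω) ^ 2))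
    (θt γ E Mbar : ℝ) (hθ : 0 < θt) (hγ : 0 < γ) (hE : 0 < E)
    (dstar : ℝ) (hdstar : dstar = θt / (γ * E) + Mbar / E) (hd : 0 ≤ dstar)
    (J : (ℝ → ℝ) → ℝ)
    (hJ : ∀ I : ℝ → ℝ, J I =
      -E * (1 + θt) * (∫ ω, I (Y ω))
      - E * (∫ ω, (Y ω - I (Y ω)))
      + γ * Mbar * E * (∫ ω, (Y ω - I (Y ω)))
      - γ * E ^ 2 / 2 * (∫ ω, (Y ω - I (Y ω)) ^ 2)) :
    ∀ I : ℝ → ℝ, Measurable I → (∀ y : ℝ, 0 ≤ y → 0 ≤ I y ∧ I y ≤ y) →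
      J I ≤ J (fun y => max (y - dstar) 0) := by
  -- integrability facts for an arbitrary admissible indemnity
  have integ : ∀ I : ℝ → ℝ, Measurable I → (∀ y : ℝ, 0 ≤ y → 0 ≤ I y ∧ I y ≤ y) →
      Integrable (fun ω => I (Y ω)) ∧
      Integrable (fun ω => Y ω - I (Y ω)) ∧
      Integrable (fun ω => (Y ω - I (Y ω)) ^ 2) := by
    intro I hIm hIb
    have hm : Measurable fun ω => I (Y ω) := hIm.comp hYmeas
    have h1 : Integrable (fun ω => I (Y ω)) := by
      refine hYint.mono hm.aestronglyMeasurable (Filter.Eventually.of_forall fun ω => ?_)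
      have := hIb (Y ω) (hYpos ω)
      rw [Real.norm_eq_abs, Real.norm_eq_abs, abs_of_nonneg this.1,
        abs_of_nonneg (hYpos ω)]
      exact this.2
    have h2 : Integrable (fun ω => Y ω - I (Y ω)) := hYint.sub h1
    refine ⟨h1, h2, ?_⟩
    refine hY2int.mono (h2.aestronglyMeasurable.pow 2)
      (Filter.Eventually.of_forall fun ω => ?_)
    have hb := hIb (Y ω) (hYpos ω)
    rw [Real.norm_eq_abs, Real.norm_eq_abs, abs_of_nonneg (sq_nonneg _),
      abs_of_nonneg (sq_nonneg _)]
    have h0 : 0 ≤ Y ω - I (Y ω) := by linarith [hb.2]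
    have h1' : Y ω - I (Y ω) ≤ Y ω := by linarith [hb.1]
    nlinarith
  -- J I as a single integral
  have Jeq : ∀ I : ℝ → ℝ, Measurable I → (∀ y : ℝ, 0 ≤ y → 0 ≤ I y ∧ I y ≤ y) →
      J I = ∫ ω, (-E * (1 + θt) * I (Y ω) - E * (Y ω - I (Y ω))
        + γ * Mbar * E * (Y ω - I (Y ω))
        - γ * E ^ 2 / 2 * (Y ω - I (Y ω)) ^ 2) := by
    intro I hIm hIb
    obtain ⟨h1, h2, h3⟩ := integ I hIm hIb
    have A : Integrable (fun ω => -E * (1 + θt) * I (Y ω)) := h1.const_mul _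
    have B : Integrable (fun ω => E * (Y ω - I (Y ω))) := h2.const_mul _
    have C : Integrable (fun ω => γ * Mbar * E * (Y ω - I (Y ω))) := h2.const_mul _
    have D : Integrable (fun ω => γ * E ^ 2 / 2 * (Y ω - I (Y ω)) ^ 2) := h3.const_mul _
    have AB : Integrable (fun ω => -E * (1 + θt) * I (Y ω) - E * (Y ω - I (Y ω))) := A.sub B
    have ABC : Integrable (fun ω => -E * (1 + θt) * I (Y ω) - E * (Y ω - I (Y ω))
        + γ * Mbar * E * (Y ω - I (Y ω))) := AB.add C
    rw [hJ I]
    rw [← integral_const_mul, ← integral_const_mul, ← integral_const_mul,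
      ← integral_const_mul, ← integral_sub A B, ← integral_add AB C,
      ← integral_sub ABC D]
  intro I hIm hIb
  set Istar : ℝ → ℝ := fun y => max (y - dstar) 0 with hIstar
  have hIsm : Measurable Istar := (measurable_id.sub measurable_const).max measurable_const
  have hIsb : ∀ y : ℝ, 0 ≤ y → 0 ≤ Istar y ∧ Istar y ≤ y := by
    intro y hy
    exact ⟨le_max_right _ _, max_le (by linarith) hy⟩
  rw [Jeq I hIm hIb, Jeq Istar hIsm hIsb]
  obtain ⟨h1, h2, h3⟩ := integ I hIm hIb
  obtain ⟨g1, g2, g3⟩ := integ Istar hIsm hIsb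
  refine integral_mono ?_ ?_ fun ω => ?_
  · exact (((h1.const_mul _).sub (h2.const_mul _)).add (h2.const_mul _)).sub
      (h3.const_mul _)
  · exact (((g1.const_mul _).sub (g2.const_mul _)).add (g2.const_mul _)).sub
      (g3.const_mul _)
  · have hb := hIb (Y ω) (hYpos ω)
    exact deductible_pointwise θt γ E Mbar dstar (Y ω) (I (Y ω)) hγ hE hdstar
      (hYpos ω) hb.1 hb.2
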